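/- If H is a connected graph, then sdim_f(H) ≤ sdim_f(K_1 ⊙ H) ≤ (1 + |V(H)|)/2, where K_1 ⊙ H is the join of a single vertex with H. -/

import Mathlib

open SimpleGraph

/-- `Sset G x y` is the set `S{x,y}` of vertices `z` such that `x` lies on some shortest
`y`–`z` path or `y` lies on some shortest `x`–`z` path in `G`. -/
def Sset {V : Type*} (G : SimpleGraph V) (x y : V) : Set V :=
  {z | (∃ p : G.Walk y z, p.length = G.dist y z ∧ x ∈ p.support) ∨
       (∃ p : G.Walk x z, p.length = G.dist x z ∧ y ∈ p.support)}

/-- A strong resolving function of `G`: `g : V → [0,1]` with `g(S{x,y}) ≥ 1` for all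
distinct vertices `x, y`. -/
def IsSRF {V : Type*} (G : SimpleGraph V) (g : V → ℝ) : Prop :=
  (∀ v, 0 ≤ g v ∧ g v ≤ 1) ∧ ∀ x y : V, x ≠ y → 1 ≤ ∑ᶠ z ∈ Sset G x y, g z

/-- The fractional strong metric dimension of `G`. -/
noncomputable def sdimf {V : Type*} (G : SimpleGraph V) : ℝ :=
  sInf {s : ℝ | ∃ g : V → ℝ, IsSRF G g ∧ s = ∑ᶠ v, g v}

/-- A strong resolving set of `G`: every pair of distinct vertices is strongly resolved
by some vertex of `S` (i.e. some vertex of `S` lies in `S{x,y}`). -/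
def IsSRSet {V : Type*} (G : SimpleGraph V) (S : Set V) : Prop :=
  ∀ x y : V, x ≠ y → ∃ z ∈ S, z ∈ Sset G x y

/-- The strong metric dimension of `G`: the minimum cardinality of a strong resolving set. -/
noncomputable def sdim {V : Type*} (G : SimpleGraph V) : ℕ :=
  sInf {n : ℕ | ∃ S : Set V, IsSRSet G S ∧ S.ncard = n}

/-- `u` is maximally distant from `v`: `d(u,v) ≥ d(w,v)` for every neighbor `w` of `u`. -/
def MaxDistFrom {V : Type*} (G : SimpleGraph V) (u v : V) : Prop :=
  ∀ w : V, G.Adj u w → G.dist w v ≤ G.dist u v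

/-- `u` and `v` are mutually maximally distant (MMD) in `G`. -/
def MMD {V : Type*} (G : SimpleGraph V) (u v : V) : Prop :=
  u ≠ v ∧ MaxDistFrom G u v ∧ MaxDistFrom G v u

/-- The strong resolving graph of `G` (on the ambient vertex set): `u ~ v` iff `u` MMD `v`. -/
def SRGraph {V : Type*} (G : SimpleGraph V) : SimpleGraph V where
  Adj := MMD G
  symm := ⟨fun _ _ h => ⟨h.1.symm, h.2.2, h.2.1⟩⟩
  loopless := ⟨fun _ h => h.1 rfl⟩

/-- `M(G)`: the set of vertices that are mutually maximally distant with some vertex. -/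
def Mset {V : Type*} (G : SimpleGraph V) : Set V := {x | ∃ y, MMD G x y}

/-- The matching number of `G`. -/
noncomputable def matchNum {V : Type*} (G : SimpleGraph V) : ℕ :=
  sSup {n : ℕ | ∃ M : G.Subgraph, M.IsMatching ∧ M.edgeSet.ncard = n}

/-- The corona product `G ⊙ H`. -/
def corona {V W : Type*} (G : SimpleGraph V) (H : SimpleGraph W) :
    SimpleGraph (V ⊕ V × W) where
  Adj x y :=
    match x, y with
    | Sum.inl u, Sum.inl u' => G.Adj u u'
    | Sum.inl u, Sum.inr iw => u = iw.1
    | Sum.inr iw, Sum.inl u => iw.1 = u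
    | Sum.inr iw, Sum.inr iw' => iw.1 = iw'.1 ∧ H.Adj iw.2 iw'.2
  symm := by
    refine ⟨?_⟩
    rintro (u | iw) (u' | iw') h
    · exact G.adj_symm h
    · exact h.symm
    · exact h.symm
    · exact ⟨h.1.symm, H.adj_symm h.2⟩
  loopless := by
    refine ⟨?_⟩
    rintro (u | iw) h
    · exact G.loopless.irrefl u h
    · exact H.loopless.irrefl iw.2 h.2

/-- `K₁ ⊙ H`: the graph obtained from `H` by adding one new vertex adjacent to every
vertex of `H`. -/
def cone {W : Type*} (H : SimpleGraph W) : SimpleGraph (Option W) where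
  Adj x y :=
    match x, y with
    | none, none => False
    | none, some _ => True
    | some _, none => True
    | some w, some w' => H.Adj w w'
  symm := by
    refine ⟨?_⟩
    rintro (_ | w) (_ | w') h
    · exact h
    · exact trivial
    · exact trivial
    · exact H.adj_symm h
  loopless := by
    refine ⟨?_⟩
    rintro (_ | w) h
    · exact h
    · exact H.loopless.irrefl w h

/-- The lexicographic product `G[H]`. -/
def lexProd {V W : Type*} (G : SimpleGraph V) (H : SimpleGraph W) :
    SimpleGraph (V × W) where
  Adj x y := G.Adj x.1 y.1 ∨ (x.1 = y.1 ∧ H.Adj x.2 y.2)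
  symm := by
    refine ⟨?_⟩
    rintro x y (h | ⟨h1, h2⟩)
    · exact Or.inl (G.adj_symm h)
    · exact Or.inr ⟨h1.symm, H.adj_symm h2⟩
  loopless := by
    refine ⟨?_⟩
    rintro x (h | ⟨_, h2⟩)
    · exact G.loopless.irrefl x.1 h
    · exact H.loopless.irrefl x.2 h2

/-- `SL{x,y} = (N[x] ∪ N[y]) ∩ S{x,y}`. -/
def SLset {W : Type*} (H : SimpleGraph W) (x y : W) : Set W :=
  (insert x (H.neighborSet x) ∪ insert y (H.neighborSet y)) ∩ Sset H x y

/-- A strong locating function of `H`. -/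
def IsSLF {W : Type*} (H : SimpleGraph W) (f : W → ℝ) : Prop :=
  (∀ v, 0 ≤ f v ∧ f v ≤ 1) ∧ ∀ x y : W, x ≠ y → 1 ≤ ∑ᶠ z ∈ SLset H x y, f z

/-- `sl_f(H)`: the minimum weight of a strong locating function of `H`. -/
noncomputable def slf {W : Type*} (H : SimpleGraph W) : ℝ :=
  sInf {s : ℝ | ∃ f : W → ℝ, IsSLF H f ∧ s = ∑ᶠ v, f v}

/-- `u` has a true twin: some other vertex with the same closed neighborhood. -/
def HasTrueTwin {V : Type*} (G : SimpleGraph V) (u : V) : Prop :=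
  ∃ v : V, v ≠ u ∧ insert v (G.neighborSet v) = insert u (G.neighborSet u)

/-- `u` has a false twin: some other vertex with the same open neighborhood. -/
def HasFalseTwin {V : Type*} (G : SimpleGraph V) (u : V) : Prop :=
  ∃ v : V, v ≠ u ∧ G.neighborSet v = G.neighborSet u

/-- `m₁(G)`: number of vertices in type-1 (singleton) classes of the twin relation. -/
noncomputable def m1 {V : Type*} (G : SimpleGraph V) : ℕ :=
  {u : V | ¬ HasTrueTwin G u ∧ ¬ HasFalseTwin G u}.ncard

/-- `m₂(G)`: number of vertices in type-2 (clique) classes of the twin relation. -/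
noncomputable def m2 {V : Type*} (G : SimpleGraph V) : ℕ :=
  {u : V | HasTrueTwin G u}.ncard

/-- `m₃(G)`: number of vertices in type-3 (independent set) classes of the twin relation. -/
noncomputable def m3 {V : Type*} (G : SimpleGraph V) : ℕ :=
  {u : V | HasFalseTwin G u}.ncard

/-- The strong resolving graph of `G` (whose vertex set is `M(G)`) is Hamiltonian:
there is a cycle in `SRGraph G` passing through every vertex of `M(G)`. -/
def SRHamiltonian {V : Type*} (G : SimpleGraph V) : Prop :=
  ∃ (u : V) (p : (SRGraph G).Walk u u), p.IsCycle ∧ ∀ v ∈ Mset G, v ∈ p.support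

section Aux

open Classical in
/-- The set of weights of SRFs is bounded below by `0`. -/
lemma srf_set_bddBelow {V : Type*} [Fintype V] (G : SimpleGraph V) :
    BddBelow {s : ℝ | ∃ g : V → ℝ, IsSRF G g ∧ s = ∑ᶠ v, g v} := by
  refine ⟨0, ?_⟩
  rintro s ⟨g, hg, rfl⟩
  exact finsum_nonneg fun v => (hg.1 v).1

lemma finsum_mem_mono_of_nonneg {V : Type*} [Fintype V] {g : V → ℝ}
    (hg : ∀ v, 0 ≤ g v) {S T : Set V} (h : S ⊆ T) :
    ∑ᶠ z ∈ S, g z ≤ ∑ᶠ z ∈ T, g z := by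
  classical
  rw [finsum_mem_eq_finite_toFinset_sum _ S.toFinite,
    finsum_mem_eq_finite_toFinset_sum _ T.toFinite]
  apply Finset.sum_le_sum_of_subset_of_nonneg
  · intro v hv
    simp only [Set.Finite.mem_toFinset] at *
    exact h hv
  · intro v _ _
    exact hg v

lemma mem_Sset_left {V : Type*} {G : SimpleGraph V} {x y : V}
    (h : G.Reachable y x) : x ∈ Sset G x y := by
  obtain ⟨p, hp⟩ := h.exists_walk_length_eq_dist
  exact Or.inl ⟨p, hp, p.end_mem_support⟩

lemma mem_Sset_right {V : Type*} {G : SimpleGraph V} {x y : V}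
    (h : G.Reachable x y) : y ∈ Sset G x y := by
  obtain ⟨p, hp⟩ := h.exists_walk_length_eq_dist
  exact Or.inr ⟨p, hp, p.end_mem_support⟩

lemma cone_adj_none_some {W : Type*} (H : SimpleGraph W) (w : W) :
    (cone H).Adj none (some w) := trivial

lemma cone_adj_some_some {W : Type*} (H : SimpleGraph W) {a b : W} :
    (cone H).Adj (some a) (some b) ↔ H.Adj a b := Iff.rfl

lemma cone_connected {W : Type*} (H : SimpleGraph W) : (cone H).Connected := by
  rw [SimpleGraph.connected_iff]
  refine ⟨?_, ⟨none⟩⟩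
  have key : ∀ v : Option W, (cone H).Reachable none v := by
    rintro (_ | w)
    · exact SimpleGraph.Reachable.refl none
    · exact (cone_adj_none_some H w).reachable
  intro u v
  exact (key u).symm.trans (key v)

lemma cone_dist_le_two {W : Type*} (H : SimpleGraph W) (a b : W) :
    (cone H).dist (some a) (some b) ≤ 2 := by
  have h := SimpleGraph.dist_le (SimpleGraph.Walk.cons ((cone_adj_none_some H a).symm)
      (SimpleGraph.Walk.cons (cone_adj_none_some H b) SimpleGraph.Walk.nil))
  simpa using h

/-- Key lemma: a geodesic in `cone H` from `some y` to `z` passing through `some x`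
(with `x ≠ y`) forces `z = some w` with a corresponding geodesic in `H`. -/
lemma cone_geodesic_aux {W : Type*} (H : SimpleGraph W) (hH : H.Connected)
    {x y : W} (hxy : x ≠ y) {z : Option W} (p : (cone H).Walk (some y) z)
    (hp : p.length = (cone H).dist (some y) z) (hx : some x ∈ p.support) :
    ∃ w : W, z = some w ∧ ∃ q : H.Walk y w, q.length = H.dist y w ∧ x ∈ q.support := by
  have hxgeo : ∀ w : W, w = x →
      ∃ q : H.Walk y w, q.length = H.dist y w ∧ x ∈ q.support := by
    rintro w rfl
    obtain ⟨q, hq⟩ := (hH.preconnected y w).exists_walk_length_eq_dist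
    exact ⟨q, hq, q.end_mem_support⟩
  cases z with
  | none =>
    exfalso
    have hd : (cone H).dist (some y) none = 1 :=
      SimpleGraph.dist_eq_one_iff_adj.mpr trivial
    rw [hd] at hp
    cases p with
    | cons h q =>
      cases q with
      | nil =>
        simp only [SimpleGraph.Walk.support_cons, SimpleGraph.Walk.support_nil,
          List.mem_cons, List.mem_singleton, List.not_mem_nil, or_false] at hx
        rcases hx with h1 | h1
        · exact hxy (Option.some_injective _ h1)
        · exact absurd h1 (by simp)
      | cons h' q' => simp [SimpleGraph.Walk.length_cons] at hp
  | some w =>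
    refine ⟨w, rfl, ?_⟩
    have hle : (cone H).dist (some y) (some w) ≤ 2 := cone_dist_le_two H y w
    cases p with
    | nil =>
      exfalso
      simp only [SimpleGraph.Walk.support_nil, List.mem_singleton] at hx
      exact hxy (by simpa using hx)
    | @cons _ b _ h q =>
      cases q with
      | nil =>
        -- length 1 geodesic: edge from some y to some w, so x = w
        simp only [SimpleGraph.Walk.support_cons, SimpleGraph.Walk.support_nil,
          List.mem_cons, List.mem_singleton] at hx
        rcases hx with h1 | h1 | h1
        · exact absurd (Option.some_injective _ h1) hxy
        · exact hxgeo w (Option.some_injective _ h1).symm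
        · exact absurd h1 (by simp)
      | cons h' q' =>
        cases q' with
        | nil =>
          -- length 2 geodesic
          have hd2 : (cone H).dist (some y) (some w) = 2 := by
            simp only [SimpleGraph.Walk.length_cons, SimpleGraph.Walk.length_nil] at hp
            omega
          have hyw : y ≠ w := by
            rintro rfl
            rw [SimpleGraph.dist_self] at hd2
            omega
          have hnadj : ¬ H.Adj y w := by
            intro hadj
            have : (cone H).dist (some y) (some w) = 1 :=
              SimpleGraph.dist_eq_one_iff_adj.mpr hadj
            omega
          simp only [SimpleGraph.Walk.support_cons, SimpleGraph.Walk.support_nil,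
            List.mem_cons, List.mem_singleton] at hx
          rcases hx with h1 | h1 | h1 | h1
          · exact absurd (Option.some_injective _ h1) hxy
          · -- middle vertex is some x
            subst b
            have hyx : H.Adj y x := h
            have hxw : H.Adj x w := h'
            refine ⟨SimpleGraph.Walk.cons hyx (SimpleGraph.Walk.cons hxw
              SimpleGraph.Walk.nil), ?_, ?_⟩
            · have hle2 : H.dist y w ≤ 2 := by
                simpa using SimpleGraph.dist_le
                  (SimpleGraph.Walk.cons hyx (SimpleGraph.Walk.cons hxw
                    SimpleGraph.Walk.nil))
              have hpos : 0 < H.dist y w := (hH.preconnected y w).pos_dist_of_ne hyw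
              have hne1 : H.dist y w ≠ 1 := fun h1 =>
                hnadj (SimpleGraph.dist_eq_one_iff_adj.mp h1)
              simp only [SimpleGraph.Walk.length_cons, SimpleGraph.Walk.length_nil]
              omega
            · simp
          · exact hxgeo w (Option.some_injective _ h1).symm
          · exact absurd h1 (by simp)
        | cons h'' q'' =>
          exfalso
          simp only [SimpleGraph.Walk.length_cons] at hp
          omega

/-- `S`-sets in the cone, restricted to pairs inside `H`, come from `S`-sets in `H`. -/
lemma cone_Sset_subset {W : Type*} (H : SimpleGraph W) (hH : H.Connected)
    {x y : W} (hxy : x ≠ y) :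
    Sset (cone H) (some x) (some y) ⊆ Option.some '' Sset H x y := by
  rintro z (⟨p, hp, hx⟩ | ⟨p, hp, hy⟩)
  · obtain ⟨w, rfl, q, hq, hxq⟩ := cone_geodesic_aux H hH hxy p hp hx
    exact ⟨w, Or.inl ⟨q, hq, hxq⟩, rfl⟩
  · obtain ⟨w, rfl, q, hq, hyq⟩ := cone_geodesic_aux H hH hxy.symm p hp hy
    exact ⟨w, Or.inr ⟨q, hq, hyq⟩, rfl⟩

/-- The constant function `1/2` is an SRF of any connected graph. -/
lemma half_isSRF {V : Type*} [Fintype V] {G : SimpleGraph V} (hG : G.Connected) :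
    IsSRF G (fun _ => (1 : ℝ) / 2) := by
  classical
  constructor
  · intro v; norm_num
  · intro x y hxy
    have hxS : x ∈ Sset G x y := mem_Sset_left (hG.preconnected y x)
    have hyS : y ∈ Sset G x y := mem_Sset_right (hG.preconnected x y)
    rw [finsum_mem_eq_finite_toFinset_sum _ (Sset G x y).toFinite]
    have hsub : ({x, y} : Finset V) ⊆ (Sset G x y).toFinite.toFinset := by
      intro v hv
      simp only [Finset.mem_insert, Finset.mem_singleton] at hv
      rcases hv with rfl | rfl
      · rw [Set.Finite.mem_toFinset]; exact hxS
      · rw [Set.Finite.mem_toFinset]; exact hyS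
    calc (1 : ℝ) = ∑ v ∈ ({x, y} : Finset V), (1 : ℝ) / 2 := by
          rw [Finset.sum_pair hxy]; norm_num
      _ ≤ _ := Finset.sum_le_sum_of_subset_of_nonneg hsub (by intros; norm_num)

end Aux

/-- If `H` is a connected graph, then
`sdim_f(H) ≤ sdim_f(K₁ ⊙ H) ≤ (1 + |V(H)|)/2`. -/
theorem sdimf_cone_bounds {W : Type*} [Fintype W] (H : SimpleGraph W)
    (hH : H.Connected) :
    sdimf H ≤ sdimf (cone H) ∧ sdimf (cone H) ≤ (1 + (Fintype.card W : ℝ)) / 2 := by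
  classical
  have hconeSRF : IsSRF (cone H) (fun _ => (1 : ℝ) / 2) := half_isSRF (cone_connected H)
  have hval : ∑ᶠ v : Option W, (1 : ℝ) / 2 = (1 + (Fintype.card W : ℝ)) / 2 := by
    rw [finsum_eq_sum_of_fintype]
    simp [Finset.sum_const, Fintype.card_option]
    ring
  have hmem : (1 + (Fintype.card W : ℝ)) / 2 ∈
      {s : ℝ | ∃ g : Option W → ℝ, IsSRF (cone H) g ∧ s = ∑ᶠ v, g v} :=
    ⟨fun _ => (1 : ℝ) / 2, hconeSRF, hval.symm⟩
  constructor
  · -- lower bound: sdimf H ≤ sdimf (cone H)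
    apply le_csInf ⟨_, hmem⟩
    rintro s ⟨g, hg, rfl⟩
    have hf : IsSRF H (fun w => g (some w)) := by
      constructor
      · intro w; exact hg.1 (some w)
      · intro x y hxy
        have hxy' : (some x : Option W) ≠ some y := fun h =>
          hxy (Option.some_injective _ h)
        have h1 : (1 : ℝ) ≤ ∑ᶠ z ∈ Sset (cone H) (some x) (some y), g z :=
          hg.2 _ _ hxy'
        have h2 : ∑ᶠ z ∈ Sset (cone H) (some x) (some y), g z ≤
            ∑ᶠ z ∈ Option.some '' Sset H x y, g z :=
          finsum_mem_mono_of_nonneg (fun v => (hg.1 v).1)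
            (cone_Sset_subset H hH hxy)
        have h3 : ∑ᶠ z ∈ Option.some '' Sset H x y, g z =
            ∑ᶠ w ∈ Sset H x y, g (some w) :=
          finsum_mem_image ((Option.some_injective W).injOn)
        linarith
    have hle : ∑ᶠ w : W, g (some w) ≤ ∑ᶠ v : Option W, g v := by
      rw [finsum_eq_sum_of_fintype, finsum_eq_sum_of_fintype, Fintype.sum_option]
      have h0 : 0 ≤ g none := (hg.1 none).1
      linarith
    calc sdimf H ≤ ∑ᶠ w : W, g (some w) :=
          csInf_le (srf_set_bddBelow H) ⟨fun w => g (some w), hf, rfl⟩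
      _ ≤ _ := hle
  · -- upper bound
    exact csInf_le (srf_set_bddBelow (cone H)) hmem
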